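/- In the canonical game G(Ψ,Σ): for each non-failure state s ∈ F̄ and each complete action profile δ ∈ D^A, if the set T(s,δ) is empty, then μ(s,δ) = 0. -/

import Mathlib

/-- The interval [0,1] of real numbers, used for probability subscripts. -/
abbrev I01 : Type := Set.Icc (0 : ℝ) 1

/-- Formulae of the language Φ: propositional variables, ⊥, negation,
implication, and the coalition modality [C]_p φ with C ⊆ A and p ∈ [0,1]. -/
inductive Formula (A V : Type) : Type where
  | var : V → Formula A V
  | falsum : Formula A V
  | neg : Formula A V → Formula A V
  | imp : Formula A V → Formula A V → Formula A V
  | mod : Set A → I01 → Formula A V → Formula A V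

/-- The constant ⊤, defined in the standard way. -/
def Formula.top {A V : Type} : Formula A V := Formula.neg Formula.falsum

/-- Propositional tautologies: true under every Boolean valuation of formulae
that respects ¬, → and ⊥ (treating variables and modal formulae as atoms). -/
def Tautology {A V : Type} (φ : Formula A V) : Prop :=
  ∀ f : Formula A V → Bool,
    (∀ ψ, f (Formula.neg ψ) = !(f ψ)) →
    (∀ ψ χ, f (Formula.imp ψ χ) = (!(f ψ) || f χ)) →
    f Formula.falsum = false →
    f φ = true

noncomputable def iZero : I01 := ⟨0, by norm_num⟩
noncomputable def iOne : I01 := ⟨1, by norm_num⟩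

/-- The sublanguage Φ⁺: every modality has a nonempty coalition. -/
inductive Formula.InPlus {A V : Type} : Formula A V → Prop where
  | var (v : V) : Formula.InPlus (Formula.var v)
  | falsum : Formula.InPlus Formula.falsum
  | neg {φ} : Formula.InPlus φ → Formula.InPlus (Formula.neg φ)
  | imp {φ ψ} : Formula.InPlus φ → Formula.InPlus ψ →
      Formula.InPlus (Formula.imp φ ψ)
  | mod {C : Set A} (p : I01) {φ} : C.Nonempty → Formula.InPlus φ →
      Formula.InPlus (Formula.mod C p φ)

/-- Theorems of the logical system L (language Φ). -/
inductive LProof {A V : Type} : Formula A V → Prop where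
  | taut {φ : Formula A V} : Tautology φ → LProof φ
  | coop (C₁ C₂ : Set A) (p q : I01) (φ ψ : Formula A V) :
      C₁ ∩ C₂ = ∅ →
      LProof (Formula.imp (Formula.mod C₁ p (Formula.imp φ ψ))
        (Formula.imp (Formula.mod C₂ q φ) (Formula.mod (C₁ ∪ C₂) (max p q) ψ)))
  | mono (C : Set A) (p q : I01) (φ : Formula A V) : q ≤ p →
      LProof (Formula.imp (Formula.mod C p φ) (Formula.mod C q φ))
  | unach (C : Set A) (p : I01) : (0 : ℝ) < (p : ℝ) →
      LProof (Formula.neg (Formula.mod C p Formula.falsum))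
  | mp {φ ψ : Formula A V} : LProof (Formula.imp φ ψ) → LProof φ → LProof ψ
  | nec (C : Set A) {φ : Formula A V} : LProof φ → LProof (Formula.mod C iZero φ)

/-- Theorems of the logical system L⁺ (language Φ⁺):
the axioms of L restricted to Φ⁺, Modus Ponens, Necessitation,
and the Monotonicity inference rule. -/
inductive LPlusProof {A V : Type} : Formula A V → Prop where
  | taut {φ : Formula A V} : Tautology φ → Formula.InPlus φ → LPlusProof φ
  | coop (C₁ C₂ : Set A) (p q : I01) (φ ψ : Formula A V) :
      C₁.Nonempty → C₂.Nonempty → C₁ ∩ C₂ = ∅ →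
      Formula.InPlus φ → Formula.InPlus ψ →
      LPlusProof (Formula.imp (Formula.mod C₁ p (Formula.imp φ ψ))
        (Formula.imp (Formula.mod C₂ q φ) (Formula.mod (C₁ ∪ C₂) (max p q) ψ)))
  | mono (C : Set A) (p q : I01) (φ : Formula A V) :
      C.Nonempty → Formula.InPlus φ → q ≤ p →
      LPlusProof (Formula.imp (Formula.mod C p φ) (Formula.mod C q φ))
  | unach (C : Set A) (p : I01) : C.Nonempty → (0 : ℝ) < (p : ℝ) →
      LPlusProof (Formula.neg (Formula.mod C p Formula.falsum))
  | mp {φ ψ : Formula A V} : LPlusProof (Formula.imp φ ψ) → LPlusProof φ → LPlusProof ψ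
  | nec (C : Set A) {φ : Formula A V} : C.Nonempty → LPlusProof φ →
      LPlusProof (Formula.mod C iZero φ)
  | monoRule (C : Set A) (p : I01) {φ ψ : Formula A V} : C.Nonempty →
      LPlusProof (Formula.imp φ ψ) →
      LPlusProof (Formula.imp (Formula.mod C p φ) (Formula.mod C p ψ))

/-- X ⊢ φ: derivability of φ from the theorems of the system (given by the
theoremhood predicate `Pf`) together with the formulae of X, using only
the Modus Ponens inference rule. -/
inductive Deriv {A V : Type} (Pf : Formula A V → Prop) (X : Set (Formula A V)) :
    Formula A V → Prop where
  | thm {φ} : Pf φ → Deriv Pf X φ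
  | ax {φ} : φ ∈ X → Deriv Pf X φ
  | mp {φ ψ} : Deriv Pf X (Formula.imp φ ψ) → Deriv Pf X φ → Deriv Pf X ψ

/-- A set X is consistent if X ⊬ ⊥. -/
def Consistent {A V : Type} (Pf : Formula A V → Prop) (X : Set (Formula A V)) : Prop :=
  ¬ Deriv Pf X Formula.falsum

/-- A maximal consistent subset of a given language `Lang`. -/
def MaxConsistentIn {A V : Type} (Pf : Formula A V → Prop)
    (Lang : Set (Formula A V)) (X : Set (Formula A V)) : Prop :=
  X ⊆ Lang ∧ Consistent Pf X ∧
    ∀ Y : Set (Formula A V), Y ⊆ Lang → Consistent Pf Y → X ⊆ Y → Y = X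

/-- A stochastic game (S, F, D, P, π). -/
structure Game (A V : Type) where
  S : Type
  F : Set S
  D : Type
  D_nonempty : Nonempty D
  P : S → (A → D) → S → ℝ
  P_nonneg : ∀ s δ s', 0 ≤ P s δ s'
  P_le_one : ∀ s δ s', P s δ s' ≤ 1
  P_sum : ∀ s δ, HasSum (P s δ) 1
  pi : V → Set S

/-- Satisfaction s ⊩ φ, for the game with failure states F, transition
probabilities P and valuation π.  In the modal clause, δ ranges over action
profiles of the coalition C and δ' over complete action profiles extending δ. -/
def SatGen {A V S D : Type} (F : Set S) (P : S → (A → D) → S → ℝ)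
    (π : V → Set S) : Formula A V → S → Prop
  | Formula.var v, s => s ∈ π v
  | Formula.falsum, _ => False
  | Formula.neg φ, s => ¬ SatGen F P π φ s
  | Formula.imp φ ψ, s => SatGen F P π φ s → SatGen F P π ψ s
  | Formula.mod C p φ, s =>
      ∃ δ : ↥C → D, ∀ δ' : A → D, (∀ a : ↥C, δ' a.1 = δ a) →
        ((p : ℝ) ≤ ∑' t : ↥(Fᶜ), P s δ' t.1) ∧
        (∀ t : S, t ∉ F → 0 < P s δ' t → SatGen F P π φ t)

/-- Semantic entailment X ⊨ φ over all stochastic games and their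
non-failure states. -/
def Entails {A V : Type} (X : Set (Formula A V)) (φ : Formula A V) : Prop :=
  ∀ (G : Game A V) (s : G.S), s ∉ G.F →
    (∀ χ ∈ X, SatGen G.F G.P G.pi χ s) → SatGen G.F G.P G.pi φ s

/-- The subscript 1 − 10⁻ⁿ as an element of [0,1]. -/
noncomputable def oneMinusTenPow (n : ℕ) : I01 :=
  ⟨1 - (1 / 10 : ℝ) ^ n, by
    constructor
    · have h : (1 / 10 : ℝ) ^ n ≤ 1 := pow_le_one₀ (by norm_num) (by norm_num)
      linarith
    · have h : (0 : ℝ) ≤ (1 / 10 : ℝ) ^ n := by positivity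
      linarith⟩

/- ## The canonical stochastic game G(Ψ,Σ) -/

/-- Σ is closed with respect to subformulae. -/
def SubfClosed {A V : Type} (Sgm : Set (Formula A V)) : Prop :=
  (∀ φ, Formula.neg φ ∈ Sgm → φ ∈ Sgm) ∧
  (∀ φ ψ, Formula.imp φ ψ ∈ Sgm → φ ∈ Sgm ∧ ψ ∈ Sgm) ∧
  (∀ (C : Set A) (p : I01) φ, Formula.mod C p φ ∈ Sgm → φ ∈ Sgm)

/-- If σ ∈ Σ then ¬σ ∈ Σ, unless σ is itself a negation. -/
def NegClosed {A V : Type} (Sgm : Set (Formula A V)) : Prop :=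
  ∀ σ ∈ Sgm, (∀ τ, σ ≠ Formula.neg τ) → Formula.neg σ ∈ Sgm

/-- Non-failure states of the canonical game: maximal consistent subsets of Σ. -/
abbrev CanState {A V : Type} (Pf : Formula A V → Prop) (Sgm : Set (Formula A V)) : Type :=
  {s : Set (Formula A V) // MaxConsistentIn Pf Sgm s}

/-- The domain of actions of the canonical game: pairs (φ,p) with φ ∈ Σ and
p an arbitrary real number. -/
abbrev CanD {A V : Type} (Sgm : Set (Formula A V)) : Type := ↥Sgm × ℝ

/-- The set { p | [C]_p φ ∈ s and δ(a) = (φ,p) for all a ∈ C }. -/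
def muSet {A V : Type} (Pf : Formula A V → Prop) (Sgm : Set (Formula A V))
    (s : CanState Pf Sgm) (δ : A → CanD Sgm) : Set ℝ :=
  {r | ∃ (C : Set A) (p : I01) (φ : Formula A V), (p : ℝ) = r ∧
    Formula.mod C p φ ∈ s.1 ∧ ∀ a ∈ C, (δ a).1.1 = φ ∧ (δ a).2 = (p : ℝ)}

/-- μ(s,δ) = max{ p | [C]_p φ ∈ s and δ(a) = (φ,p) for all a ∈ C },
the maximum of the empty set being 0. -/
noncomputable def muCan {A V : Type} (Pf : Formula A V → Prop) (Sgm : Set (Formula A V))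
    (s : CanState Pf Sgm) (δ : A → CanD Sgm) : ℝ :=
  sSup (insert 0 (muSet Pf Sgm s δ))

/-- T(s,δ): all non-failure states s' with
{ φ | [C]_p φ ∈ s and δ(a) = (φ,p) for all a ∈ C } ⊆ s'. -/
def TCan {A V : Type} (Pf : Formula A V → Prop) (Sgm : Set (Formula A V))
    (s : CanState Pf Sgm) (δ : A → CanD Sgm) : Set (CanState Pf Sgm) :=
  {s' | ∀ φ : Formula A V,
    (∃ (C : Set A) (p : I01), Formula.mod C p φ ∈ s.1 ∧
      ∀ a ∈ C, (δ a).1.1 = φ ∧ (δ a).2 = (p : ℝ)) → φ ∈ s'.1}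

-- The transition probabilities of the canonical game; `none` is the failure state f.
open Classical in
noncomputable def PCan {A V : Type} (Pf : Formula A V → Prop) (Sgm : Set (Formula A V))
    (s : Option (CanState Pf Sgm)) (δ : A → CanD Sgm)
    (s' : Option (CanState Pf Sgm)) : ℝ :=
  match s, s' with
  | none, none => 1
  | none, some _ => 0
  | some t, none => 1 - muCan Pf Sgm t δ
  | some t, some t' =>
      if t' ∈ TCan Pf Sgm t δ then muCan Pf Sgm t δ / (TCan Pf Sgm t δ).ncard else 0

/-- The valuation of the canonical game: π(v) = { s ∈ F̄ | v ∈ s }. -/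
def piCan {A V : Type} (Pf : Formula A V → Prop) (Sgm : Set (Formula A V))
    (v : V) : Set (Option (CanState Pf Sgm)) :=
  {x | ∃ t : CanState Pf Sgm, x = some t ∧ Formula.var v ∈ t.1}


section Aux
variable {A V : Type} {Pf : Formula A V → Prop}

lemma aux_deriv_mono {X Y : Set (Formula A V)} {φ} (h : Deriv Pf X φ) (hXY : X ⊆ Y) :
    Deriv Pf Y φ := by
  induction h with
  | thm h => exact Deriv.thm h
  | ax h => exact Deriv.ax (hXY h)
  | mp _ _ ih1 ih2 => exact Deriv.mp ih1 ih2

lemma aux_deriv_compact {X : Set (Formula A V)} {φ} (h : Deriv Pf X φ) :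
    ∃ X₀ ⊆ X, X₀.Finite ∧ Deriv Pf X₀ φ := by
  induction h with
  | thm h => exact ⟨∅, Set.empty_subset _, Set.finite_empty, Deriv.thm h⟩
  | @ax φ h => exact ⟨{φ}, Set.singleton_subset_iff.mpr h, Set.finite_singleton _,
      Deriv.ax rfl⟩
  | mp _ _ ih1 ih2 =>
      obtain ⟨X₁, h₁, hf₁, hd₁⟩ := ih1
      obtain ⟨X₂, h₂, hf₂, hd₂⟩ := ih2
      exact ⟨X₁ ∪ X₂, Set.union_subset h₁ h₂, hf₁.union hf₂,
        Deriv.mp (aux_deriv_mono hd₁ Set.subset_union_left)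
          (aux_deriv_mono hd₂ Set.subset_union_right)⟩

lemma aux_chain_finite_subset {α : Type*} {c : Set (Set α)} (hc : IsChain (· ⊆ ·) c)
    (hne : c.Nonempty) {T : Set α} (hT : T.Finite) :
    T ⊆ ⋃₀ c → ∃ t ∈ c, T ⊆ t := by
  refine Set.Finite.induction_on (motive := fun T _ => T ⊆ ⋃₀ c → ∃ t ∈ c, T ⊆ t) T hT
    (fun _ => ⟨hne.choose, hne.choose_spec, Set.empty_subset _⟩)
    (fun {a s} ha hs ih hsub => ?_)
  obtain ⟨t₁, ht₁, hat₁⟩ := hsub (Set.mem_insert a s)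
  obtain ⟨t₂, ht₂, hst₂⟩ := ih (fun x hx => hsub (Set.mem_insert_of_mem _ hx))
  rcases hc.total ht₁ ht₂ with h | h
  · exact ⟨t₂, ht₂, Set.insert_subset (h hat₁) hst₂⟩
  · exact ⟨t₁, ht₁, Set.insert_subset hat₁ (hst₂.trans h)⟩

lemma aux_lindenbaum {Sgm Λ : Set (Formula A V)} (hΛ : Λ ⊆ Sgm)
    (hc : Consistent Pf Λ) : ∃ M, MaxConsistentIn Pf Sgm M ∧ Λ ⊆ M := by
  have hZ : ∀ c ⊆ {X : Set (Formula A V) | X ⊆ Sgm ∧ Consistent Pf X},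
      IsChain (· ⊆ ·) c → c.Nonempty →
      ∃ ub ∈ {X : Set (Formula A V) | X ⊆ Sgm ∧ Consistent Pf X}, ∀ s ∈ c, s ⊆ ub := by
    intro c hcS hchain hcne
    refine ⟨⋃₀ c, ⟨?_, ?_⟩, fun t ht => Set.subset_sUnion_of_mem ht⟩
    · exact Set.sUnion_subset fun t ht => (hcS ht).1
    · intro hd
      obtain ⟨T, hTsub, hTfin, hTD⟩ := aux_deriv_compact hd
      obtain ⟨t, htc, hTt⟩ := aux_chain_finite_subset hchain hcne hTfin hTsub
      exact (hcS htc).2 (aux_deriv_mono hTD hTt)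
  obtain ⟨M, hΛM, hmax⟩ := zorn_subset_nonempty
    {X : Set (Formula A V) | X ⊆ Sgm ∧ Consistent Pf X} hZ Λ ⟨hΛ, hc⟩
  exact ⟨M, ⟨hmax.1.1, hmax.1.2,
    fun Y hY hYc hMY => hmax.eq_of_superset ⟨hY, hYc⟩ hMY⟩, hΛM⟩

end Aux

section Aux2
variable {A V : Type} {Pf : Formula A V → Prop}

lemma aux_tautK (a b : Formula A V) :
    Tautology (Formula.imp a (Formula.imp b a)) := by
  intro f hneg himp hbot
  simp only [himp]
  cases f a <;> cases f b <;> rfl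

lemma aux_tautS (a b c : Formula A V) :
    Tautology (Formula.imp (Formula.imp a (Formula.imp b c))
      (Formula.imp (Formula.imp a b) (Formula.imp a c))) := by
  intro f hneg himp hbot
  simp only [himp]
  cases f a <;> cases f b <;> cases f c <;> rfl

lemma aux_tautI (a : Formula A V) : Tautology (Formula.imp a a) := by
  intro f hneg himp hbot
  simp only [himp]
  cases f a <;> rfl

lemma aux_tautNegE (a : Formula A V) :
    Tautology (Formula.imp (Formula.neg a) (Formula.imp a Formula.falsum)) := by
  intro f hneg himp hbot
  simp only [himp, hneg, hbot]
  cases f a <;> rfl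

lemma aux_inPlus_imp {a b : Formula A V} (h : Formula.InPlus (Formula.imp a b)) :
    Formula.InPlus a ∧ Formula.InPlus b := by
  cases h with
  | imp h1 h2 => exact ⟨h1, h2⟩

lemma aux_inPlus_neg {a : Formula A V} (h : Formula.InPlus (Formula.neg a)) :
    Formula.InPlus a := by
  cases h with
  | neg h1 => exact h1

lemma aux_inPlus_mod {C : Set A} {p : I01} {a : Formula A V}
    (h : Formula.InPlus (Formula.mod C p a)) : C.Nonempty ∧ Formula.InPlus a := by
  cases h with
  | mod p h1 h2 => exact ⟨h1, h2⟩

lemma aux_lplus_inPlus {φ : Formula A V} (h : LPlusProof φ) : Formula.InPlus φ := by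
  induction h with
  | taut _ h => exact h
  | coop C₁ C₂ p q φ ψ h1 h2 _ h4 h5 =>
      exact Formula.InPlus.imp (Formula.InPlus.mod _ h1 (Formula.InPlus.imp h4 h5))
        (Formula.InPlus.imp (Formula.InPlus.mod _ h2 h4)
          (Formula.InPlus.mod _ (h1.mono Set.subset_union_left) h5))
  | mono C p q φ h1 h2 _ =>
      exact Formula.InPlus.imp (Formula.InPlus.mod _ h1 h2) (Formula.InPlus.mod _ h1 h2)
  | unach C p h1 _ =>
      exact Formula.InPlus.neg (Formula.InPlus.mod _ h1 Formula.InPlus.falsum)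
  | mp _ _ ih1 _ => exact (aux_inPlus_imp ih1).2
  | nec C h1 _ ih => exact Formula.InPlus.mod _ h1 ih
  | monoRule C p h1 _ ih =>
      exact Formula.InPlus.imp (Formula.InPlus.mod _ h1 (aux_inPlus_imp ih).1)
        (Formula.InPlus.mod _ h1 (aux_inPlus_imp ih).2)

lemma aux_gf_deriv (GF : Formula A V → Prop) (hPf : ∀ χ, Pf χ → GF χ)
    (hinv : ∀ a b, GF (Formula.imp a b) → GF a ∧ GF b)
    {X : Set (Formula A V)} (hX : ∀ χ ∈ X, GF χ) {φ} (h : Deriv Pf X φ) : GF φ := by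
  induction h with
  | thm h => exact hPf _ h
  | ax h => exact hX _ h
  | mp _ _ ih1 _ => exact (hinv _ _ ih1).2

lemma aux_deduction (GF : Formula A V → Prop)
    (htaut : ∀ χ, Tautology χ → GF χ → Pf χ)
    (hGFimp : ∀ a b, GF a → GF b → GF (Formula.imp a b))
    (hGFinv : ∀ a b, GF (Formula.imp a b) → GF a ∧ GF b)
    {X : Set (Formula A V)} {φ : Formula A V} (hGFφ : GF φ)
    (hGFd : ∀ ψ, Deriv Pf (insert φ X) ψ → GF ψ)
    {ψ : Formula A V} (h : Deriv Pf (insert φ X) ψ) :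
    Deriv Pf X (Formula.imp φ ψ) := by
  induction h with
  | @thm ψ h =>
      have hψ : GF ψ := hGFd _ (Deriv.thm h)
      exact Deriv.mp (Deriv.thm (htaut _ (aux_tautK ψ φ)
        (hGFimp _ _ hψ (hGFimp _ _ hGFφ hψ)))) (Deriv.thm h)
  | @ax ψ h =>
      rcases Set.mem_insert_iff.mp h with rfl | h
      · exact Deriv.thm (htaut _ (aux_tautI ψ) (hGFimp _ _ hGFφ hGFφ))
      · have hψ : GF ψ := hGFd _ (Deriv.ax (Set.mem_insert_of_mem _ h))
        exact Deriv.mp (Deriv.thm (htaut _ (aux_tautK ψ φ)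
          (hGFimp _ _ hψ (hGFimp _ _ hGFφ hψ)))) (Deriv.ax h)
  | @mp ψ₁ ψ₂ h1 h2 ih1 ih2 =>
      have hψ₁ : GF ψ₁ := hGFd _ h2
      have hψ₂ : GF ψ₂ := (hGFinv _ _ (hGFd _ h1)).2
      have hS := htaut _ (aux_tautS φ ψ₁ ψ₂)
        (hGFimp _ _ (hGFimp _ _ hGFφ (hGFimp _ _ hψ₁ hψ₂))
          (hGFimp _ _ (hGFimp _ _ hGFφ hψ₁) (hGFimp _ _ hGFφ hψ₂)))
      exact Deriv.mp (Deriv.mp (Deriv.thm hS) ih1) ih2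

lemma aux_deriv_empty (hmp : ∀ a b : Formula A V, Pf (Formula.imp a b) → Pf a → Pf b)
    {φ : Formula A V} (h : Deriv Pf (∅ : Set (Formula A V)) φ) : Pf φ := by
  induction h with
  | thm h => exact h
  | ax h => exact absurd h (Set.notMem_empty _)
  | mp _ _ ih1 ih2 => exact hmp _ _ ih1 ih2

def impChain {A V : Type} : List (Formula A V) → Formula A V → Formula A V
  | [], χ => χ
  | hd :: tl, χ => impChain tl (Formula.imp hd χ)

lemma aux_impChain_eq {A V : Type} (l : List (Formula A V)) (χ : Formula A V) :
    impChain l χ = l.reverse.foldr Formula.imp χ := by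
  induction l generalizing χ with
  | nil => rfl
  | cons hd tl ih =>
      simp only [impChain, List.reverse_cons, List.foldr_append, List.foldr_cons,
        List.foldr_nil, ih]

lemma aux_dedChain (GF : Formula A V → Prop)
    (htaut : ∀ χ, Tautology χ → GF χ → Pf χ)
    (hmp : ∀ a b : Formula A V, Pf (Formula.imp a b) → Pf a → Pf b)
    (hPfGF : ∀ χ, Pf χ → GF χ)
    (hGFimp : ∀ a b, GF a → GF b → GF (Formula.imp a b))
    (hGFinv : ∀ a b, GF (Formula.imp a b) → GF a ∧ GF b) :
    ∀ (l : List (Formula A V)) (χ : Formula A V), GF χ → (∀ ψ ∈ l, GF ψ) →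
      Deriv Pf {x | x ∈ l} χ → Pf (impChain l χ) := by
  intro l
  induction l with
  | nil =>
      intro χ _ _ h
      refine aux_deriv_empty hmp ?_
      convert h using 2
      ext x; simp
      rfl
  | cons hd tl ih =>
      intro χ hχ hl h
      have hset : ({x | x ∈ hd :: tl} : Set (Formula A V)) = insert hd {x | x ∈ tl} := by
        ext x; simp
      rw [hset] at h
      have hGFhd : GF hd := hl hd (List.mem_cons_self)
      have hded : Deriv Pf {x | x ∈ tl} (Formula.imp hd χ) :=
        aux_deduction GF htaut hGFimp hGFinv hGFhd
          (fun ψ hψ => aux_gf_deriv GF hPfGF hGFinv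
            (by rintro χ' (rfl | hχ') ; exact hGFhd
                exact hl _ (List.mem_cons_of_mem _ hχ')) hψ) h
      exact ih (Formula.imp hd χ) (hGFimp _ _ hGFhd hχ)
        (fun ψ hψ => hl _ (List.mem_cons_of_mem _ hψ)) hded

end Aux2

section Aux3
variable {A V : Type} {Pf : Formula A V → Prop}

lemma aux_gf_fold (GF : Formula A V → Prop)
    (hGFimp : ∀ a b, GF a → GF b → GF (Formula.imp a b))
    (hGFbot : GF Formula.falsum) :
    ∀ M : List (Formula A V × Set A × I01), (∀ e ∈ M, GF e.1) →
      GF ((M.map Prod.fst).foldr Formula.imp Formula.falsum) := by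
  intro M
  induction M with
  | nil => intro _; simpa using hGFbot
  | cons e tl ih =>
      intro h
      simpa using hGFimp _ _ (h e List.mem_cons_self)
        (ih fun e' he' => h e' (List.mem_cons_of_mem _ he'))

lemma aux_chain {X : Set (Formula A V)} (Cond : Set A → Prop) (GF : Formula A V → Prop)
    (hCondU : ∀ U C, Cond U → Cond C → Cond (U ∪ C))
    (hGFimp : ∀ a b, GF a → GF b → GF (Formula.imp a b))
    (hGFbot : GF Formula.falsum)
    (hcoop : ∀ (C₁ C₂ : Set A) (p q : I01) (φ ψ : Formula A V),
      C₁ ∩ C₂ = ∅ → Cond C₁ → Cond C₂ → GF φ → GF ψ →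
      Pf (Formula.imp (Formula.mod C₁ p (Formula.imp φ ψ))
        (Formula.imp (Formula.mod C₂ q φ) (Formula.mod (C₁ ∪ C₂) (max p q) ψ)))) :
    ∀ (M : List (Formula A V × Set A × I01)) (U : Set A) (Q : I01),
      Cond U →
      (∀ e ∈ M, Formula.mod e.2.1 e.2.2 e.1 ∈ X ∧ Cond e.2.1 ∧ GF e.1 ∧ e.2.1 ∩ U = ∅) →
      M.Pairwise (fun e e' => e.2.1 ∩ e'.2.1 = ∅) →
      Deriv Pf X (Formula.mod U Q ((M.map Prod.fst).foldr Formula.imp Formula.falsum)) →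
      ∃ (U' : Set A) (Q' : I01), Cond U' ∧ Q ≤ Q' ∧ (∀ e ∈ M, e.2.2 ≤ Q') ∧
        Deriv Pf X (Formula.mod U' Q' Formula.falsum) := by
  intro M
  induction M with
  | nil =>
      intro U Q hU _ _ hd
      exact ⟨U, Q, hU, le_refl _, by simp, by simpa using hd⟩
  | cons e tl ih =>
      intro U Q hU hM hpw hd
      obtain ⟨hmodX, hCe, hGFe, hdisj⟩ := hM e List.mem_cons_self
      obtain ⟨hhead, htlpw⟩ := List.pairwise_cons.mp hpw
      have hGFrest : GF ((tl.map Prod.fst).foldr Formula.imp Formula.falsum) :=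
        aux_gf_fold GF hGFimp hGFbot tl
          (fun e' he' => (hM e' (List.mem_cons_of_mem _ he')).2.2.1)
      have hco := hcoop U e.2.1 Q e.2.2 e.1 _
        (by rw [Set.inter_comm]; exact hdisj) hU hCe hGFe hGFrest
      have hd0 : Deriv Pf X (Formula.mod U Q (Formula.imp e.1
          ((tl.map Prod.fst).foldr Formula.imp Formula.falsum))) := by
        simpa using hd
      have hd' : Deriv Pf X (Formula.mod (U ∪ e.2.1) (max Q e.2.2)
          ((tl.map Prod.fst).foldr Formula.imp Formula.falsum)) :=
        Deriv.mp (Deriv.mp (Deriv.thm hco) hd0) (Deriv.ax hmodX)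
      have htlhyp : ∀ e' ∈ tl, Formula.mod e'.2.1 e'.2.2 e'.1 ∈ X ∧ Cond e'.2.1 ∧
          GF e'.1 ∧ e'.2.1 ∩ (U ∪ e.2.1) = ∅ := by
        intro e' he'
        obtain ⟨h1, h2, h3, h4⟩ := hM e' (List.mem_cons_of_mem _ he')
        refine ⟨h1, h2, h3, ?_⟩
        rw [Set.inter_union_distrib_left, h4, Set.inter_comm e'.2.1 e.2.1,
          hhead e' he', Set.union_empty]
      obtain ⟨U', Q', hU', hQ', hall, hfin⟩ :=
        ih (U ∪ e.2.1) (max Q e.2.2) (hCondU _ _ hU hCe) htlhyp htlpw hd'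
      refine ⟨U', Q', hU', le_trans (le_max_left _ _) hQ', ?_, hfin⟩
      intro e' he'
      rcases List.mem_cons.mp he' with rfl | he'
      · exact le_trans (le_max_right _ _) hQ'
      · exact hall e' he'

lemma aux_master {Sgm : Set (Formula A V)} (hsub : SubfClosed Sgm)
    (Cond : Set A → Prop) (GF : Formula A V → Prop)
    (htaut : ∀ χ, Tautology χ → GF χ → Pf χ)
    (hmp : ∀ a b : Formula A V, Pf (Formula.imp a b) → Pf a → Pf b)
    (hPfGF : ∀ χ, Pf χ → GF χ)
    (hGFimp : ∀ a b, GF a → GF b → GF (Formula.imp a b))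
    (hGFinv : ∀ a b, GF (Formula.imp a b) → GF a ∧ GF b)
    (hGFbot : GF Formula.falsum)
    (hGFneg : ∀ a, GF a → GF (Formula.neg a))
    (hGFmod : ∀ (C : Set A) (p : I01) a, Cond C → GF a → GF (Formula.mod C p a))
    (hGFS : ∀ χ ∈ Sgm, GF χ)
    (hCondS : ∀ (C : Set A) (p : I01) (φ : Formula A V),
      Formula.mod C p φ ∈ Sgm → Cond C)
    (hCondU : ∀ U C, Cond U → Cond C → Cond (U ∪ C))
    (hcoop : ∀ (C₁ C₂ : Set A) (p q : I01) (φ ψ : Formula A V),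
      C₁ ∩ C₂ = ∅ → Cond C₁ → Cond C₂ → GF φ → GF ψ →
      Pf (Formula.imp (Formula.mod C₁ p (Formula.imp φ ψ))
        (Formula.imp (Formula.mod C₂ q φ) (Formula.mod (C₁ ∪ C₂) (max p q) ψ))))
    (hunach : ∀ (C : Set A) (p : I01), Cond C → (0 : ℝ) < (p : ℝ) →
      Pf (Formula.neg (Formula.mod C p Formula.falsum)))
    (s : CanState Pf Sgm) (δ : A → CanD Sgm)
    (hstart : ∀ (C : Set A) (p : I01) (φ ρ : Formula A V),
      Formula.mod C p φ ∈ s.1 → GF φ → GF ρ → Pf (Formula.imp φ ρ) →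
      Deriv Pf s.1 (Formula.mod C p ρ))
    (hT : TCan Pf Sgm s δ = ∅)
    (Cstar : Set A) (pstar : I01) (φstar : Formula A V)
    (hpos : (0 : ℝ) < (pstar : ℝ))
    (hmodstar : Formula.mod Cstar pstar φstar ∈ s.1)
    (hagstar : ∀ a ∈ Cstar, (δ a).1.1 = φstar ∧ (δ a).2 = (pstar : ℝ)) : False := by
  classical
  set Λ := {φ : Formula A V | ∃ (C : Set A) (p : I01), Formula.mod C p φ ∈ s.1 ∧
    ∀ a ∈ C, (δ a).1.1 = φ ∧ (δ a).2 = (p : ℝ)} with hΛdef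
  have hφstarΛ : φstar ∈ Λ := ⟨Cstar, pstar, hmodstar, hagstar⟩
  have hsS : s.1 ⊆ Sgm := s.2.1
  have hΛS : Λ ⊆ Sgm := by
    rintro φ ⟨C, p, hm, _⟩
    exact hsub.2.2 C p φ (hsS hm)
  have hD : Deriv Pf Λ Formula.falsum := by
    by_contra hD
    obtain ⟨M, hM, hΛM⟩ := aux_lindenbaum hΛS hD
    have hmem : (⟨M, hM⟩ : CanState Pf Sgm) ∈ TCan Pf Sgm s δ := fun φ hφ => hΛM hφ
    rw [hT] at hmem
    exact hmem
  obtain ⟨Λ₀, hΛ₀Λ, hfin, hD₀⟩ := aux_deriv_compact hD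
  have hch : ∀ ψ : Formula A V, ∃ (C : Set A) (p : I01),
      ψ ∈ Λ → Formula.mod C p ψ ∈ s.1 ∧ ∀ a ∈ C, (δ a).1.1 = ψ ∧ (δ a).2 = (p : ℝ) := by
    intro ψ
    by_cases h : ψ ∈ Λ
    · obtain ⟨C, p, h1, h2⟩ := h
      exact ⟨C, p, fun _ => ⟨h1, h2⟩⟩
    · exact ⟨∅, iZero, fun h' => absurd h' h⟩
  choose Cw pw hw using hch
  set l0 : List (Formula A V) := (hfin.toFinset.erase φstar).toList with hl0def
  set l : List (Formula A V) := l0 ++ [φstar] with hldef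
  have hl0 : ∀ ψ ∈ l0, ψ ∈ Λ ∧ ψ ≠ φstar := by
    intro ψ hψ
    have h' := Finset.mem_erase.mp (Finset.mem_toList.mp hψ)
    exact ⟨hΛ₀Λ (hfin.mem_toFinset.mp h'.2), h'.1⟩
  have hlset : Deriv Pf {x | x ∈ l} Formula.falsum := by
    refine aux_deriv_mono hD₀ ?_
    intro x hx
    by_cases hxs : x = φstar
    · subst hxs
      simp [hldef]
    · have hx0 : x ∈ l0 :=
        Finset.mem_toList.mpr (Finset.mem_erase.mpr ⟨hxs, hfin.mem_toFinset.mpr hx⟩)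
      simp only [hldef, Set.mem_setOf_eq, List.mem_append]
      exact Or.inl hx0
  have hlΛ : ∀ ψ ∈ l, ψ ∈ Λ := by
    intro ψ hψ
    rcases List.mem_append.mp hψ with h | h
    · exact (hl0 ψ h).1
    · rw [List.mem_singleton.mp h]
      exact hφstarΛ
  have hGFl : ∀ ψ ∈ l, GF ψ := fun ψ h => hGFS _ (hΛS (hlΛ ψ h))
  have hθ : Pf (impChain l Formula.falsum) :=
    aux_dedChain GF htaut hmp hPfGF hGFimp hGFinv l _ hGFbot hGFl hlset
  set w : Formula A V → Formula A V × Set A × I01 := fun ψ => (ψ, Cw ψ, pw ψ) with hwdef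
  set M : List (Formula A V × Set A × I01) := l0.reverse.map w with hMdef
  have hmapfst : M.map Prod.fst = l0.reverse := by
    simp [hMdef, hwdef, List.map_map, Function.comp_def]
  have hθ' : Pf (Formula.imp φstar
      ((M.map Prod.fst).foldr Formula.imp Formula.falsum)) := by
    have h2 := hθ
    rw [aux_impChain_eq] at h2
    rw [hmapfst]
    simpa [hldef] using h2
  have hGFρ : GF ((M.map Prod.fst).foldr Formula.imp Formula.falsum) := by
    refine aux_gf_fold GF hGFimp hGFbot M ?_
    intro e he
    obtain ⟨ψ, hψ, rfl⟩ := List.mem_map.mp (hMdef ▸ he)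
    exact hGFS _ (hΛS (hl0 ψ (List.mem_reverse.mp hψ)).1)
  have hstart' : Deriv Pf s.1 (Formula.mod Cstar pstar
      ((M.map Prod.fst).foldr Formula.imp Formula.falsum)) :=
    hstart Cstar pstar φstar _ hmodstar (hGFS _ (hΛS hφstarΛ)) hGFρ hθ'
  have hdisjstar : ∀ ψ ∈ Λ, ψ ≠ φstar → Cw ψ ∩ Cstar = ∅ := by
    intro ψ hψ hne
    rw [Set.eq_empty_iff_forall_notMem]
    rintro a ⟨ha1, ha2⟩
    exact hne (((hw ψ hψ).2 a ha1).1.symm.trans (hagstar a ha2).1)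
  have hMhyp : ∀ e ∈ M, Formula.mod e.2.1 e.2.2 e.1 ∈ s.1 ∧ Cond e.2.1 ∧
      GF e.1 ∧ e.2.1 ∩ Cstar = ∅ := by
    intro e he
    obtain ⟨ψ, hψ, rfl⟩ := List.mem_map.mp (hMdef ▸ he)
    obtain ⟨hψΛ, hψne⟩ := hl0 ψ (List.mem_reverse.mp hψ)
    have hmod := (hw ψ hψΛ).1
    exact ⟨hmod, hCondS _ _ _ (hsS hmod), hGFS _ (hΛS hψΛ), hdisjstar ψ hψΛ hψne⟩
  have hMpw : M.Pairwise (fun e e' => e.2.1 ∩ e'.2.1 = ∅) := by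
    have hnd : l0.reverse.Nodup := List.nodup_reverse.mpr (Finset.nodup_toList _)
    have hpw1 : l0.reverse.Pairwise (fun ψ ψ' => Cw ψ ∩ Cw ψ' = ∅) := by
      refine hnd.imp_of_mem ?_
      intro ψ ψ' hψ hψ' hne
      rw [Set.eq_empty_iff_forall_notMem]
      rintro a ⟨ha1, ha2⟩
      have h1 := ((hw ψ (hl0 ψ (List.mem_reverse.mp hψ)).1).2 a ha1).1
      have h2 := ((hw ψ' (hl0 ψ' (List.mem_reverse.mp hψ')).1).2 a ha2).1
      exact hne (h1.symm.trans h2)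
    exact List.Pairwise.map w (fun ψ ψ' h => h) hpw1
  obtain ⟨U', Q', hCondU', hQle, _, hfinD⟩ :=
    aux_chain Cond GF hCondU hGFimp hGFbot hcoop M Cstar pstar
      (hCondS _ _ _ (hsS hmodstar)) hMhyp hMpw hstart'
  have hQpos : (0 : ℝ) < (Q' : ℝ) := lt_of_lt_of_le hpos hQle
  have hun := hunach U' Q' hCondU' hQpos
  have hGFm : GF (Formula.mod U' Q' Formula.falsum) := hGFmod _ _ _ hCondU' hGFbot
  have htne := htaut _ (aux_tautNegE _)
    (hGFimp _ _ (hGFneg _ hGFm) (hGFimp _ _ hGFm hGFbot))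
  exact s.2.2.1 (Deriv.mp (Deriv.mp (Deriv.thm htne) (Deriv.thm hun)) hfinD)

end Aux3


/-- in the canonical game G(Ψ,Σ), for each non-failure state s
and each complete action profile δ, if T(s,δ) is empty, then μ(s,δ) = 0. -/
theorem canonical_mu_eq_zero (A V : Type) [Fintype A] (Pf : Formula A V → Prop) (Sgm : Set (Formula A V))
    (hsub : SubfClosed Sgm) (hneg : NegClosed Sgm)
    (hcase : (Pf = @LProof A V ∧ Sgm.Finite) ∨
      (Pf = @LPlusProof A V ∧ ∀ χ ∈ Sgm, Formula.InPlus χ))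
    (s : CanState Pf Sgm) (δ : A → CanD Sgm)
    (hT : TCan Pf Sgm s δ = ∅) :
    muCan Pf Sgm s δ = 0 := by
  have hub : ∀ r ∈ muSet Pf Sgm s δ, r ≤ 0 := by
    rintro r ⟨C, p, φ, hpr, hmod, hag⟩
    by_contra hr
    have hpos : (0 : ℝ) < (p : ℝ) := by
      rw [hpr]; exact not_le.mp hr
    rcases hcase with ⟨rfl, _⟩ | ⟨rfl, hplus⟩
    · refine aux_master hsub (fun _ => True) (fun _ => True)
        (fun χ h _ => LProof.taut h) (fun a b => LProof.mp) (fun _ _ => trivial)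
        (fun _ _ _ _ => trivial) (fun _ _ _ => ⟨trivial, trivial⟩) trivial
        (fun _ _ => trivial) (fun _ _ _ _ _ => trivial) (fun _ _ => trivial)
        (fun _ _ _ _ => trivial) (fun _ _ _ _ => trivial)
        (fun C₁ C₂ p q φ ψ h _ _ _ _ => LProof.coop C₁ C₂ p q φ ψ h)
        (fun C p _ h => LProof.unach C p h)
        s δ ?_ hT C p φ hpos hmod hag
      intro C' p' φ' ρ hmem _ _ hPf
      have t3 := LProof.mp (LProof.coop ∅ C' iZero p' φ' ρ (Set.empty_inter C'))
        (LProof.nec ∅ hPf)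
      have hd := Deriv.mp (Deriv.thm t3) (Deriv.ax hmem)
      have h1 : (∅ : Set A) ∪ C' = C' := Set.empty_union C'
      have h2 : max iZero p' = p' := max_eq_right (Subtype.coe_le_coe.mp p'.2.1)
      rw [h1, h2] at hd
      exact hd
    · refine aux_master hsub Set.Nonempty Formula.InPlus
        (fun χ h hi => LPlusProof.taut h hi) (fun a b => LPlusProof.mp)
        (fun χ h => aux_lplus_inPlus h) (fun a b => Formula.InPlus.imp)
        (fun a b => aux_inPlus_imp) Formula.InPlus.falsum
        (fun a => Formula.InPlus.neg)
        (fun C' p' a hC hGF => Formula.InPlus.mod p' hC hGF) hplus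
        (fun C' p' φ' h => (aux_inPlus_mod (hplus _ h)).1)
        (fun U C' hU _ => hU.inl)
        (fun C₁ C₂ p' q' φ' ψ' h hC₁ hC₂ hφ hψ =>
          LPlusProof.coop C₁ C₂ p' q' φ' ψ' hC₁ hC₂ h hφ hψ)
        (fun C' p' hC h => LPlusProof.unach C' p' hC h)
        s δ ?_ hT C p φ hpos hmod hag
      intro C' p' φ' ρ hmem hφ' hρ hPf
      have hC : C'.Nonempty := (aux_inPlus_mod (hplus _ (s.2.1 hmem))).1
      exact Deriv.mp (Deriv.thm (LPlusProof.monoRule C' p' hC hPf)) (Deriv.ax hmem)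
  unfold muCan
  apply le_antisymm
  · apply Real.sSup_le
    · rintro x hx
      rcases Set.mem_insert_iff.mp hx with rfl | hx
      · exact le_refl 0
      · exact hub x hx
    · exact le_refl 0
  · apply le_csSup
    · refine ⟨0, ?_⟩
      rintro x hx
      rcases Set.mem_insert_iff.mp hx with rfl | hx
      · exact le_refl 0
      · exact hub x hx
    · exact Set.mem_insert 0 _
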